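/- For any composition s = (s_1,…,s_n), the number of elements of the s-weak order satisfies the identity ∏_{i=1}^{n-1}(1 + s_{n-i+1} + ⋯ + s_n) = Σ_j binom(s_n+1, j_1) binom(s_{n-1}+1, j_2) ⋯ binom(s_2+1, j_{n-1}) · ∏_{i=1}^{n-1}(j_1 + ⋯ + j_i − i + 1), where the sum ranges over weak compositions j = (j_1,…,j_{n-1}) of n−1 with j_1 + ⋯ + j_i ≥ i for all i. -/

import Mathlib

open Finset

/-- partial sum of the first `k+1` entries of `j`. -/
def pJ {M N : ℕ} (j : Fin M → Fin N) (k : Fin M) : ℕ :=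
  ∑ m ∈ Finset.univ.filter (· ≤ k), (j m : ℕ)

/-- the weight of a tuple. -/
def pW (b : ℕ → ℕ) {M N : ℕ} (j : Fin M → Fin N) : ℕ :=
  (∏ i : Fin M, Nat.choose (b i.val) (j i)) *
    ∏ i : Fin M, (pJ j i + 1 - (i.val + 1))

/-- the weighted count. -/
def pA (N : ℕ) (b : ℕ → ℕ) (M t : ℕ) : ℕ :=
  ∑ j : Fin M → Fin N, if (∑ i, (j i : ℕ)) = t then pW b j else 0

lemma pJ_last {M N : ℕ} (j : Fin (M + 1) → Fin N) :
    pJ j (Fin.last M) = ∑ i, (j i : ℕ) := by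
  unfold pJ
  rw [Finset.filter_true_of_mem (fun m _ => Fin.le_last m)]

lemma pJ_snoc_castSucc {M N : ℕ} (j : Fin M → Fin N) (a : Fin N) (k : Fin M) :
    pJ (Fin.snoc j a : Fin (M + 1) → Fin N) k.castSucc = pJ j k := by
  unfold pJ
  refine Finset.sum_nbij' (i := fun m => (⟨min m.val k.val, by omega⟩ : Fin M))
    (j := fun m => m.castSucc) ?_ ?_ ?_ ?_ ?_
  · intro m hm
    simp only [mem_filter, mem_univ, true_and, Fin.le_def] at hm ⊢
    omega
  · intro m hm
    simp only [mem_filter, mem_univ, true_and, Fin.le_def] at hm ⊢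
    simpa using hm
  · intro m hm
    simp only [mem_filter, mem_univ, true_and, Fin.le_def, Fin.coe_castSucc] at hm
    apply Fin.ext
    simp only [Fin.coe_castSucc]
    omega
  · intro m hm
    simp only [mem_filter, mem_univ, true_and, Fin.le_def] at hm
    apply Fin.ext
    simp only [Fin.coe_castSucc]
    omega
  · intro m hm
    simp only [mem_filter, mem_univ, true_and, Fin.le_def, Fin.coe_castSucc] at hm
    have hk : k.val < M := k.isLt
    have hmM : m.val < M := by omega
    have hme : m = Fin.castSucc (⟨m.val, hmM⟩ : Fin M) := Fin.ext rfl
    conv_lhs => rw [hme, Fin.snoc_castSucc]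
    exact congrArg (fun x : Fin M => ((j x : Fin N) : ℕ)) (Fin.ext (by simp only; omega))

lemma sum_coe_snoc {M N : ℕ} (j : Fin M → Fin N) (a : Fin N) :
    (∑ i, ((Fin.snoc j a : Fin (M + 1) → Fin N) i : ℕ)) = (∑ i, (j i : ℕ)) + a := by
  rw [Fin.sum_univ_castSucc]
  simp [Fin.snoc_castSucc, Fin.snoc_last]

lemma pW_snoc {M N : ℕ} (b : ℕ → ℕ) (j : Fin M → Fin N) (a : Fin N) :
    pW b (Fin.snoc j a : Fin (M + 1) → Fin N) =
      ((∏ i : Fin M, Nat.choose (b i.val) (j i)) * Nat.choose (b M) a) *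
        ((∏ i : Fin M, (pJ j i + 1 - (i.val + 1))) * ((∑ i, (j i : ℕ)) + a + 1 - (M + 1))) := by
  unfold pW
  rw [Fin.prod_univ_castSucc, Fin.prod_univ_castSucc]
  congr 1
  · congr 1
    · apply Finset.prod_congr rfl
      intro i _
      rw [Fin.snoc_castSucc]
      rfl
    · rw [Fin.snoc_last]
      rfl
  · congr 1
    · apply Finset.prod_congr rfl
      intro i _
      rw [pJ_snoc_castSucc]
      rfl
    · rw [pJ_last, sum_coe_snoc]
      rfl

lemma pA_zero_lt {N M t : ℕ} (b : ℕ → ℕ) (h : t < M) : pA N b M t = 0 := by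
  obtain ⟨M', rfl⟩ : ∃ M', M = M' + 1 := ⟨M - 1, by omega⟩
  unfold pA
  apply Finset.sum_eq_zero
  intro j _
  split_ifs with hj
  · unfold pW
    apply mul_eq_zero_of_right
    apply Finset.prod_eq_zero (Finset.mem_univ (Fin.last M'))
    rw [pJ_last, hj]
    simp only [Fin.val_last]
    omega
  · rfl

lemma pA_succ (N : ℕ) (b : ℕ → ℕ) (M t : ℕ) :
    pA N b (M + 1) t =
      (t - M) * ∑ a : Fin N, Nat.choose (b M) a *
        (if (a : ℕ) ≤ t then pA N b M (t - (a : ℕ)) else 0) := by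
  unfold pA
  rw [← Equiv.sum_comp (Fin.snocEquiv (fun _ => Fin N)), Fintype.sum_prod_type,
    Finset.mul_sum]
  apply Finset.sum_congr rfl
  intro a _
  have step1 : ∀ j : Fin M → Fin N,
      (if (∑ i, ((Fin.snocEquiv (fun _ => Fin N) (a, j)) i : ℕ)) = t
        then pW b (Fin.snocEquiv (fun _ => Fin N) (a, j)) else 0)
      = if (∑ i, (j i : ℕ)) + (a : ℕ) = t then (t - M) * (Nat.choose (b M) a * pW b j) else 0 := by
    intro j
    have he : (Fin.snocEquiv (fun _ => Fin N) (a, j)) = (Fin.snoc j a : Fin (M + 1) → Fin N) := rfl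
    rw [he, sum_coe_snoc, pW_snoc]
    split_ifs with h
    · rw [h]
      unfold pW
      have : t + 1 - (M + 1) = t - M := by omega
      rw [this]
      ring
    · rfl
  rw [Finset.sum_congr rfl (fun j _ => step1 j)]
  by_cases ha : (a : ℕ) ≤ t
  · rw [if_pos ha, Finset.mul_sum, Finset.mul_sum]
    apply Finset.sum_congr rfl
    intro j _
    split_ifs with h1 h2
    · rfl
    · exact absurd (by omega) h2
    · exact absurd (by omega) h1
    · simp
  · rw [if_neg ha, mul_zero, mul_zero]
    apply Finset.sum_eq_zero
    intro j _
    rw [if_neg (by omega)]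

lemma sum_range_le_b {b : ℕ → ℕ} (hb : ∀ i, 1 ≤ b i) (m : ℕ) :
    m ≤ ∑ k ∈ Finset.range m, b k := by
  calc m = ∑ _k ∈ Finset.range m, 1 := by simp
  _ ≤ ∑ k ∈ Finset.range m, b k := Finset.sum_le_sum (fun k _ => hb k)

lemma pA_formula (N : ℕ) (b : ℕ → ℕ) (hb : ∀ i, 1 ≤ b i) :
    ∀ M t, M ≤ t → t < N →
      pA N b M t = (∏ i ∈ Finset.range M, ((∑ k ∈ Finset.range (i + 1), b k) - i)) *
        Nat.choose ((∑ k ∈ Finset.range M, b k) - M) (t - M) := by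
  intro M
  induction M with
  | zero =>
    intro t _ _
    simp only [Finset.range_zero, Finset.prod_empty, Finset.sum_empty, Nat.zero_sub,
      Nat.sub_zero, one_mul]
    unfold pA
    rw [Fintype.sum_eq_single (default : Fin 0 → Fin N)
      (fun x hx => absurd (Subsingleton.elim x default) hx)]
    unfold pW
    rcases Nat.eq_zero_or_pos t with rfl | ht
    · simp
    · rw [Nat.choose_eq_zero_of_lt (by omega), if_neg (by simp; omega)]
  | succ M IH =>
    intro t hMt htN
    have hBM : M ≤ ∑ k ∈ Finset.range M, b k := sum_range_le_b hb M
    have hBM1 : M + 1 ≤ ∑ k ∈ Finset.range (M + 1), b k := sum_range_le_b hb (M + 1)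
    rw [pA_succ]
    rw [Fin.sum_univ_eq_sum_range
      (fun a => Nat.choose (b M) a * (if a ≤ t then pA N b M (t - a) else 0)) N]
    have hsub : Finset.range (t - M + 1) ⊆ Finset.range N := by
      apply Finset.range_subset_range.2; omega
    rw [← Finset.sum_subset hsub ?van]
    case van =>
      intro a _ ha
      simp only [Finset.mem_range] at ha
      by_cases h : a ≤ t
      · rw [if_pos h, pA_zero_lt b (by omega), mul_zero]
      · rw [if_neg h, mul_zero]
    have hcong : ∀ a ∈ Finset.range (t - M + 1),
        Nat.choose (b M) a * (if a ≤ t then pA N b M (t - a) else 0) =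
        Nat.choose (b M) a *
          ((∏ i ∈ Finset.range M, ((∑ k ∈ Finset.range (i + 1), b k) - i)) *
            Nat.choose ((∑ k ∈ Finset.range M, b k) - M) ((t - M) - a)) := by
      intro a ha
      simp only [Finset.mem_range] at ha
      rw [if_pos (by omega), IH (t - a) (by omega) (by omega)]
      have h3 : t - a - M = t - M - a := by omega
      rw [h3]
    rw [Finset.sum_congr rfl hcong]
    have van : (∑ a ∈ Finset.range (t - M + 1), Nat.choose (b M) a *
          ((∏ i ∈ Finset.range M, ((∑ k ∈ Finset.range (i + 1), b k) - i)) *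
            Nat.choose ((∑ k ∈ Finset.range M, b k) - M) ((t - M) - a)))
        = (∏ i ∈ Finset.range M, ((∑ k ∈ Finset.range (i + 1), b k) - i)) *
          Nat.choose ((∑ k ∈ Finset.range (M + 1), b k) - M) (t - M) := by
      have hvdm : ((∑ k ∈ Finset.range (M + 1), b k) - M)
          = b M + ((∑ k ∈ Finset.range M, b k) - M) := by
        rw [Finset.sum_range_succ]; omega
      rw [hvdm, Nat.add_choose_eq, Finset.Nat.sum_antidiagonal_eq_sum_range_succ_mk,
        Finset.mul_sum]
      apply Finset.sum_congr rfl
      intro a _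
      ring
    rw [van]
    rw [Finset.prod_range_succ]
    have key : (t - M) * Nat.choose ((∑ k ∈ Finset.range (M + 1), b k) - M) (t - M)
        = ((∑ k ∈ Finset.range (M + 1), b k) - M) *
          Nat.choose ((∑ k ∈ Finset.range (M + 1), b k) - (M + 1)) (t - (M + 1)) := by
      obtain ⟨X, hX⟩ : ∃ X, (∑ k ∈ Finset.range (M + 1), b k) - M = X + 1 :=
        ⟨(∑ k ∈ Finset.range (M + 1), b k) - M - 1, by omega⟩
      obtain ⟨k, hk⟩ : ∃ k, t - M = k + 1 := ⟨t - M - 1, by omega⟩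
      have h1 : (∑ k ∈ Finset.range (M + 1), b k) - (M + 1) = X := by omega
      have h2 : t - (M + 1) = k := by omega
      rw [hX, hk, h1, h2, mul_comm ((k + 1)) _]
      exact (Nat.add_one_mul_choose_eq X k).symm
    calc (t - M) * ((∏ i ∈ Finset.range M, ((∑ k ∈ Finset.range (i + 1), b k) - i)) *
          Nat.choose ((∑ k ∈ Finset.range (M + 1), b k) - M) (t - M))
        = (∏ i ∈ Finset.range M, ((∑ k ∈ Finset.range (i + 1), b k) - i)) *
          ((t - M) * Nat.choose ((∑ k ∈ Finset.range (M + 1), b k) - M) (t - M)) := by ring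
      _ = _ := by rw [key]; ring

lemma icc_sum_eq (s : ℕ → ℕ) (n i : ℕ) (h1 : 1 ≤ i) (h2 : i ≤ n - 1) (hn : 1 ≤ n) :
    ∑ r ∈ Finset.Icc (n - i + 1) n, s r = ∑ k ∈ Finset.range i, s (n - k) := by
  refine Finset.sum_nbij' (i := fun r => n - r) (j := fun k => n - k) ?_ ?_ ?_ ?_ ?_
  · intro r hr
    simp only [Finset.mem_Icc, Finset.mem_range] at hr ⊢
    omega
  · intro k hk
    simp only [Finset.mem_Icc, Finset.mem_range] at hk ⊢
    omega
  · intro r hr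
    simp only [Finset.mem_Icc] at hr
    omega
  · intro k hk
    simp only [Finset.mem_range] at hk
    omega
  · intro r hr
    simp only [Finset.mem_Icc] at hr
    congr 1
    omega

lemma lhs_eq (s : ℕ → ℕ) (n : ℕ) (hn : 1 ≤ n) :
    ∏ i ∈ Finset.Icc 1 (n - 1), (1 + ∑ r ∈ Finset.Icc (n - i + 1) n, s r) =
      ∏ i ∈ Finset.range (n - 1), ((∑ k ∈ Finset.range (i + 1), (s (n - k) + 1)) - i) := by
  refine Finset.prod_nbij' (i := fun i => i - 1) (j := fun i => i + 1) ?_ ?_ ?_ ?_ ?_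
  · intro i hi
    simp only [Finset.mem_Icc, Finset.mem_range] at hi ⊢
    omega
  · intro i hi
    simp only [Finset.mem_Icc, Finset.mem_range] at hi ⊢
    omega
  · intro i hi
    simp only [Finset.mem_Icc] at hi
    omega
  · intro i hi
    omega
  · intro i hi
    simp only [Finset.mem_Icc] at hi
    have hr : Finset.range (i - 1 + 1) = Finset.range i := by
      congr 1
      omega
    rw [hr, Finset.sum_add_distrib, Finset.sum_const, Finset.card_range, smul_eq_mul, mul_one,
      icc_sum_eq s n i hi.1 hi.2 hn]
    omega

/-- For a composition `s = (s₁,…,sₙ)` of positive integers, the number of elements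
of the `s`-weak order satisfies
`∏_{i=1}^{n-1}(1 + s_{n-i+1} + ⋯ + s_n)
  = Σ_j binom(s_n+1, j_1) ⋯ binom(s_2+1, j_{n-1}) · ∏_{i=1}^{n-1}(j_1+⋯+j_i − i + 1)`,
the sum ranging over weak compositions `j = (j_1,…,j_{n-1})` of `n−1` with
`j_1 + ⋯ + j_i ≥ i` for all `i`.  (Here `j` is encoded as a function
`Fin (n-1) → Fin n`, `j_k = j ⟨k-1⟩`.) -/
theorem s_weak_order_count_identity (n : ℕ) (s : ℕ → ℕ)
    (hs : ∀ i ∈ Finset.Icc 1 n, 1 ≤ s i) :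
    ∏ i ∈ Finset.Icc 1 (n - 1), (1 + ∑ r ∈ Finset.Icc (n - i + 1) n, s r) =
      ∑ j ∈ Finset.univ.filter (fun j : Fin (n - 1) → Fin n =>
          (∑ i, (j i : ℕ)) = n - 1 ∧
          ∀ k : Fin (n - 1), k.val + 1 ≤ ∑ i ∈ Finset.univ.filter (· ≤ k), (j i : ℕ)),
        (∏ i : Fin (n - 1), Nat.choose (s (n - i.val) + 1) (j i)) *
          ∏ i : Fin (n - 1),
            ((∑ m ∈ Finset.univ.filter (· ≤ i), (j m : ℕ)) + 1 - (i.val + 1)) := by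
  rcases Nat.eq_zero_or_pos n with rfl | hn
  · simp
  have hb : ∀ i, 1 ≤ (fun i => s (n - i) + 1) i := fun i => Nat.le_add_left 1 _
  have h1 : (∑ j ∈ Finset.univ.filter (fun j : Fin (n - 1) → Fin n =>
          (∑ i, (j i : ℕ)) = n - 1 ∧
          ∀ k : Fin (n - 1), k.val + 1 ≤ ∑ i ∈ Finset.univ.filter (· ≤ k), (j i : ℕ)),
        (∏ i : Fin (n - 1), Nat.choose (s (n - i.val) + 1) (j i)) *
          ∏ i : Fin (n - 1),
            ((∑ m ∈ Finset.univ.filter (· ≤ i), (j m : ℕ)) + 1 - (i.val + 1)))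
      = pA n (fun i => s (n - i) + 1) (n - 1) (n - 1) := by
    rw [Finset.sum_filter]
    unfold pA pW pJ
    apply Finset.sum_congr rfl
    intro j _
    by_cases hc1 : (∑ i, (j i : ℕ)) = n - 1
    · by_cases hc2 : ∀ k : Fin (n - 1),
        k.val + 1 ≤ ∑ i ∈ Finset.univ.filter (· ≤ k), (j i : ℕ)
      · rw [if_pos ⟨hc1, hc2⟩, if_pos hc1]
      · rw [if_neg (fun h => hc2 h.2), if_pos hc1]
        push_neg at hc2
        obtain ⟨k, hk⟩ := hc2
        symm
        apply mul_eq_zero_of_right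
        apply Finset.prod_eq_zero (Finset.mem_univ k)
        omega
    · rw [if_neg (fun h => hc1 h.1), if_neg hc1]
  rw [h1]
  rw [pA_formula n (fun i => s (n - i) + 1) hb (n - 1) (n - 1) le_rfl (Nat.sub_lt hn Nat.one_pos)]
  rw [Nat.sub_self, Nat.choose_zero_right, mul_one]
  rw [lhs_eq s n hn]
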